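/- Let M(k₁,k₂) be the 4×4 antisymmetric matrix of the previous statement. Then all eigenvalues of iM(k₁,k₂) lie in [−1, 1]; i.e., I + iM(k₁,k₂) ≥ 0 and I − iM(k₁,k₂) ≥ 0. -/

import Mathlib

open Matrix
open scoped ComplexOrder

lemma key_ineq (α β : ℝ) (hα : 1 ≤ α) (hβ : 1 ≤ β)
    (p0 q0 p1 q1 p2 q2 p3 q3 : ℝ) :
    0 ≤ (p0^2+q0^2+p1^2+q1^2+p2^2+q2^2+p3^2+q3^2)
      + 2*((α^2-1)/α^2) * (q0*p1 - p0*q1)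
      + 2*((β^2-1)/β^2) * (q2*p3 - p2*q3)
      + 2*(1/(α*β)) * (q0*p3 - p0*q3 + q1*p2 - p1*q2) := by
  have hα0 : (0:ℝ) < α := lt_of_lt_of_le one_pos hα
  have hβ0 : (0:ℝ) < β := lt_of_lt_of_le one_pos hβ
  have ha : 0 ≤ (α^2-1)/α^2 := div_nonneg (by nlinarith) (by positivity)
  have hb : 0 ≤ (β^2-1)/β^2 := div_nonneg (by nlinarith) (by positivity)
  have hid : (p0^2+q0^2+p1^2+q1^2+p2^2+q2^2+p3^2+q3^2)
      + 2*((α^2-1)/α^2) * (q0*p1 - p0*q1)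
      + 2*((β^2-1)/β^2) * (q2*p3 - p2*q3)
      + 2*(1/(α*β)) * (q0*p3 - p0*q3 + q1*p2 - p1*q2)
      = ((α^2-1)/α^2) * ((p0-q1)^2+(q0+p1)^2)
      + ((β^2-1)/β^2) * ((p2-q3)^2+(q2+p3)^2)
      + (p0/α - q3/β)^2 + (q0/α + p3/β)^2
      + (p1/α - q2/β)^2 + (q1/α + p2/β)^2 := by
    field_simp
    ring
  have t1 : 0 ≤ ((α^2-1)/α^2) * ((p0-q1)^2+(q0+p1)^2) := mul_nonneg ha (by positivity)
  have t2 : 0 ≤ ((β^2-1)/β^2) * ((p2-q3)^2+(q2+p3)^2) := mul_nonneg hb (by positivity)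
  rw [hid]
  have t3 : 0 ≤ (p0/α - q3/β)^2 := sq_nonneg _
  have t4 : 0 ≤ (q0/α + p3/β)^2 := sq_nonneg _
  have t5 : 0 ≤ (p1/α - q2/β)^2 := sq_nonneg _
  have t6 : 0 ≤ (q1/α + p2/β)^2 := sq_nonneg _
  linarith

set_option maxHeartbeats 1000000 in
theorem stmt15 (k₁ k₂ : ℕ) (hk₁ : 1 ≤ k₁) (hk₂ : 1 ≤ k₂)
    (M : Matrix (Fin 4) (Fin 4) ℝ)
    (hM : M = !![0, ((k₁ : ℝ) - 1) / k₁, 0, 1 / Real.sqrt (k₁ * k₂);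
                 -(((k₁ : ℝ) - 1) / k₁), 0, 1 / Real.sqrt (k₁ * k₂), 0;
                 0, -(1 / Real.sqrt (k₁ * k₂)), 0, ((k₂ : ℝ) - 1) / k₂;
                 -(1 / Real.sqrt (k₁ * k₂)), 0, -(((k₂ : ℝ) - 1) / k₂), 0]) :
    ((1 : Matrix (Fin 4) (Fin 4) ℂ) + Complex.I • (M.map Complex.ofReal)).PosSemidef ∧
    ((1 : Matrix (Fin 4) (Fin 4) ℂ) - Complex.I • (M.map Complex.ofReal)).PosSemidef := by
  subst hM
  have hk1 : (1:ℝ) ≤ (k₁:ℝ) := by exact_mod_cast hk₁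
  have hk2 : (1:ℝ) ≤ (k₂:ℝ) := by exact_mod_cast hk₂
  have hs : Real.sqrt ((k₁:ℝ) * k₂) = Real.sqrt k₁ * Real.sqrt k₂ :=
    Real.sqrt_mul (by linarith) _
  rw [hs]
  set α := Real.sqrt (k₁:ℝ) with hαdef
  set β := Real.sqrt (k₂:ℝ) with hβdef
  have hα1 : 1 ≤ α := by
    rw [hαdef, show (1:ℝ) = Real.sqrt 1 by simp]; exact Real.sqrt_le_sqrt hk1
  have hβ1 : 1 ≤ β := by
    rw [hβdef, show (1:ℝ) = Real.sqrt 1 by simp]; exact Real.sqrt_le_sqrt hk2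
  have hαk : (k₁:ℝ) = α^2 := (Real.sq_sqrt (by linarith)).symm
  have hβk : (k₂:ℝ) = β^2 := (Real.sq_sqrt (by linarith)).symm
  constructor
  · rw [posSemidef_iff_dotProduct_mulVec]; constructor
    · ext i j
      fin_cases i <;> fin_cases j <;>
        simp [Matrix.conjTranspose_apply, Matrix.one_apply, Complex.ext_iff]
    · intro x
      rw [Complex.le_def]
      constructor
      · simp [dotProduct, mulVec, Fin.sum_univ_four, Complex.add_re, Complex.mul_re,
          Complex.mul_im]
        rw [hαk, hβk]
        exact le_of_le_of_eq (key_ineq α β hα1 hβ1 (x 0).re (x 0).im (x 1).re (x 1).im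
          (x 2).re (x 2).im (x 3).re (x 3).im) (by ring)
      · simp [dotProduct, mulVec, Fin.sum_univ_four, Complex.ext_iff]
        ring_nf
  · rw [posSemidef_iff_dotProduct_mulVec]; constructor
    · ext i j
      fin_cases i <;> fin_cases j <;>
        simp [Matrix.conjTranspose_apply, Matrix.one_apply, Complex.ext_iff]
    · intro x
      rw [Complex.le_def]
      constructor
      · simp [dotProduct, mulVec, Fin.sum_univ_four, Complex.add_re, Complex.mul_re,
          Complex.mul_im]
        rw [hαk, hβk]
        exact le_of_le_of_eq (key_ineq α β hα1 hβ1 (x 0).re (-(x 0).im) (x 1).re (-(x 1).im)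
          (x 2).re (-(x 2).im) (x 3).re (-(x 3).im)) (by ring)
      · simp [dotProduct, mulVec, Fin.sum_univ_four, Complex.ext_iff]
        ring_nf
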